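/- Let f be a polynomial map ℂ → ℂ of degree n ≥ 2 whose derivative f′ vanishes at exactly one point of ℂ. Let z and z′ be periodic points of f of periods h ≥ 1 and h′ ≥ 1 respectively, with multipliers μ = ∏_{j=0}^{h-1} f′(f^{∘j}(z)) and μ′ = ∏_{j=0}^{h′-1} f′(f^{∘j}(z′)). Then the integral closure of ℤ[μ] in ℂ equals the integral closure of ℤ[μ′] in ℂ. -/

import Mathlib

/-- The integral closure of `ℤ[u]` in `ℂ`: the set of complex numbers satisfying a
monic polynomial equation with coefficients in the subring `ℤ[u]` of `ℂ`. -/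
noncomputable def intClosure (u : ℂ) : Set ℂ :=
  {x : ℂ | IsIntegral ↥(Algebra.adjoin ℤ ({u} : Set ℂ)) x}

section Auxiliary

open Polynomial



variable {K : Type*} [Field K]

/-- x integral over subring A of field K iff x lies in every valuation subring containing A. -/
theorem isIntegral_iff_forall_valuationSubring (A : Subring K) (x : K) :
    IsIntegral A x ↔ ∀ O : ValuationSubring K, A ≤ O.toSubring → x ∈ O := by
  constructor
  · intro hx O hAO
    -- transfer integrality to O
    obtain ⟨q, hq, hq0⟩ := hx
    have hxO : IsIntegral O.toSubring x :=
      ⟨q.map (Subring.inclusion hAO), hq.map _, by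
        rw [eval₂_map]
        exact hq0⟩
    have hint : Valuation.Integers O.valuation O.toSubring :=
      { hom_inj := Subtype.coe_injective
        map_le_one := fun r => O.valuation_le_one r
        exists_of_le_one := fun {r} hr => ⟨⟨r, O.mem_of_valuation_le_one r hr⟩, rfl⟩ }
    exact O.mem_of_valuation_le_one x (hint.mem_of_integral hxO)
  · intro hall
    by_contra hni
    have hx0 : x ≠ 0 := fun e => hni (e ▸ isIntegral_zero)
    set S : Subalgebra A K := Algebra.adjoin A {x⁻¹} with hS
    have hxS : x⁻¹ ∈ S := Algebra.self_mem_adjoin_singleton _ _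
    -- x⁻¹ is not a unit of S
    have hnu : ¬ IsUnit (⟨x⁻¹, hxS⟩ : S) := by
      intro hu
      obtain ⟨c, hc⟩ := isUnit_iff_exists_inv.mp hu
      have hcK : (c : K) * x⁻¹ = 1 := congrArg Subtype.val (mul_comm (⟨x⁻¹, hxS⟩ : S) c ▸ hc)
      have hcx : (c : K) = x := by
        field_simp at hcK
        exact hcK
      have hxmem : x ∈ S := hcx ▸ c.2
      rw [hS, Algebra.adjoin_singleton_eq_range_aeval] at hxmem
      obtain ⟨q, hq⟩ := hxmem
      -- build monic polynomial killing x
      set r : Polynomial A := X * q - 1 with hr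
      have hq' : aeval x⁻¹ q = x := hq
      have hr0 : aeval x⁻¹ r = 0 := by
        simp only [hr, map_sub, map_mul, map_one, aeval_X, hq', inv_mul_cancel₀ hx0, sub_self]
      have hrc : r.coeff 0 = -1 := by rw [hr, coeff_sub, mul_coeff_zero, coeff_X_zero, zero_mul, coeff_one_zero, zero_sub]
      have hrne : r ≠ 0 := fun e => by simp [e] at hrc
      have := IsUnit.invertible (isUnit_iff_ne_zero.mpr (inv_ne_zero hx0))
      have hrev : aeval x r.reverse = 0 := by
        have h2 : eval₂ (algebraMap A K) (⅟(x⁻¹)) r.reverse = 0 :=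
          (Polynomial.eval₂_reverse_eq_zero_iff (algebraMap A K) x⁻¹ r).mpr (by
            rw [← aeval_def]; exact hr0)
        rwa [invOf_eq_right_inv (inv_mul_cancel₀ hx0), ← aeval_def] at h2
      apply hni
      refine ⟨-r.reverse, ?_, ?_⟩
      · have htd : r.natTrailingDegree = 0 := by
          simp [Polynomial.natTrailingDegree_eq_zero, hrc]
        rw [Monic, leadingCoeff_neg, reverse_leadingCoeff, trailingCoeff, htd, hrc, neg_neg]
      · -- (-r.reverse) evaluated at x via algebraMap A K
        have : (aeval x (-r.reverse) : K) = 0 := by rw [map_neg, hrev, neg_zero]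
        -- IsIntegral A x unfolds to eval₂ over A
        rwa [← aeval_def]
    -- get maximal ideal containing x⁻¹
    have hne : (Ideal.span {(⟨x⁻¹, hxS⟩ : S)} : Ideal S) ≠ ⊤ := by
      rw [Ne, Ideal.span_singleton_eq_top]
      exact hnu
    obtain ⟨M, hM, hMle⟩ := Ideal.exists_le_maximal _ hne
    have hxM : (⟨x⁻¹, hxS⟩ : S) ∈ M := hMle (Ideal.subset_span rfl)
    -- move to the subring S.toSubring
    letI M' : Ideal S.toSubring := M
    haveI hM' : M'.IsPrime := hM.isPrime
    let L : LocalSubring K := LocalSubring.ofPrime S.toSubring M'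
    obtain ⟨V, hLV⟩ := L.exists_le_valuationSubring
    have hSL : S.toSubring ≤ L.toSubring := LocalSubring.le_ofPrime _ _
    have hxinv_L : x⁻¹ ∈ L.toSubring := hSL hxS
    have hAV : A ≤ V.toSubring := by
      intro a ha
      have haS : a ∈ S.toSubring := S.algebraMap_mem ⟨a, ha⟩
      exact hLV.1 (hSL haS)
    have hxV : x ∈ V := hall V hAV
    -- x⁻¹ is a unit in V
    have hUnitV : IsUnit (Subring.inclusion hLV.1 (⟨x⁻¹, hxinv_L⟩ : L.toSubring)) := by
      refine isUnit_iff_exists_inv.mpr ⟨⟨x, hxV⟩, Subtype.ext ?_⟩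
      exact inv_mul_cancel₀ hx0
    haveI := hLV.2
    have hUnitL : IsUnit (⟨x⁻¹, hxinv_L⟩ : L.toSubring) :=
      hLV.2.1 _ hUnitV
    have hUnitL' : IsUnit (algebraMap S.toSubring L.toSubring (⟨x⁻¹, hxS⟩ : S.toSubring)) :=
      hUnitL
    have := (IsLocalization.AtPrime.isUnit_to_map_iff L.toSubring M'
      (⟨x⁻¹, hxS⟩ : S.toSubring)).mp hUnitL'
    exact this hxM


section aux

lemma aux_id {M : Type*} [CommMonoid M] (N B Y : M) {n : ℕ} (hn : 1 ≤ n) :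
    (N * B * Y ^ (n - 1)) ^ n = (N ^ n * B) * (B * Y ^ n) ^ (n - 1) := by
  obtain ⟨m, rfl⟩ : ∃ m, n = m + 1 := ⟨n - 1, by omega⟩
  simp only [Nat.add_sub_cancel, mul_pow, ← pow_mul, pow_succ']
  simp [Nat.mul_comm, mul_assoc, mul_comm, mul_left_comm]

lemma aux_pow_lt {Γ : Type*} [LinearOrderedCommGroupWithZero Γ] {x y : Γ} (hxy : x < y)
    (hy : y ≠ 0) {k : ℕ} (hk : k ≠ 0) : x ^ k < y ^ k := by
  obtain ⟨m, rfl⟩ : ∃ m, k = m + 1 := ⟨k - 1, by omega⟩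
  calc x ^ (m + 1) = x ^ m * x := pow_succ x m
    _ ≤ y ^ m * x := mul_le_mul_left (pow_le_pow_left' hxy.le m) x
    _ < y ^ m * y := mul_lt_mul_of_pos_left hxy (zero_lt_iff.mpr (pow_ne_zero m hy))
    _ = y ^ (m + 1) := (pow_succ y m).symm

lemma aux_one_lt_of_pow {Γ : Type*} [LinearOrderedCommGroupWithZero Γ] {x : Γ} {k : ℕ}
    (h : 1 < x ^ k) : 1 < x := by
  by_contra hle
  exact absurd (pow_le_one' (not_lt.mp hle) k) (not_le.mpr h)

end aux

theorem dyn_lemma (O : ValuationSubring ℂ) {n h : ℕ} (hn : 2 ≤ n) (hh : 1 ≤ h)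
    {b e : ℂ} (y : ℕ → ℂ)
    (hrec : ∀ j, y (j + 1) = b * y j ^ n + e)
    (hper : y h = y 0) :
    ((n : ℂ) ^ n * b * e ^ (n - 1) ∈ O ↔
      (∏ j ∈ Finset.range h, ((n : ℂ) * b * y j ^ (n - 1))) ∈ O) := by
  set v := O.valuation with hv
  set N := v (n : ℂ) with hN
  set B := v b with hB
  set E := v e with hE
  have hn0 : (n : ℂ) ≠ 0 := Nat.cast_ne_zero.mpr (by omega)
  have hN0 : N ≠ 0 := v.ne_zero_iff.mpr hn0
  have hN1 : N ≤ 1 := O.valuation_le_one ⟨(n : ℂ), natCast_mem O.toSubring n⟩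
  have hn1 : (1 : ℕ) ≤ n := by omega
  have hn1' : n - 1 ≠ 0 := by omega
  have hnne : n ≠ 0 := by omega
  -- periodicity
  have hper' : ∀ j, y (j + h) = y j := by
    intro j
    induction j with
    | zero => simpa using hper
    | succ j ih =>
      have : j + 1 + h = (j + h) + 1 := by omega
      rw [this, hrec, ih, hrec]
  have hmod : ∀ m, y m = y (m % h) := by
    have hk : ∀ k j, y (j + h * k) = y j := by
      intro k
      induction k with
      | zero => simp
      | succ k ih =>
        intro j
        have : j + h * (k + 1) = (j + h * k) + h := by ring
        rw [this, hper', ih]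
    intro m
    conv_lhs => rw [← Nat.mod_add_div m h, hk (m / h) (m % h)]
  -- value of w
  have hw_val : v ((n : ℂ) ^ n * b * e ^ (n - 1)) = N ^ n * B * E ^ (n - 1) := by
    rw [map_mul, map_mul, map_pow, map_pow]
  -- value of the multiplier
  have hμ_val : v (∏ j ∈ Finset.range h, ((n : ℂ) * b * y j ^ (n - 1)))
      = ∏ j ∈ Finset.range h, (N * B * v (y j) ^ (n - 1)) := by
    rw [map_prod]
    exact Finset.prod_congr rfl fun j _ => by rw [map_mul, map_mul, map_pow]
  rw [← O.valuation_le_one_iff, ← O.valuation_le_one_iff, hw_val, hμ_val]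
  constructor
  · -- direction A
    intro hw
    apply Finset.prod_le_one'
    intro j hj
    obtain ⟨j₀, hj₀mem, hj₀max⟩ :=
      Finset.exists_max_image (Finset.range h) (fun i => v (y i)) ⟨0, by simp; omega⟩
    have hfac : N * B * v (y j₀) ^ (n - 1) ≤ 1 := by
      by_contra hc
      push_neg at hc
      set Y := v (y j₀) with hY
      have hprodne : N * B * Y ^ (n - 1) ≠ 0 := by
        intro h0; rw [h0] at hc; exact absurd hc (by simp)
      have hB0 : B ≠ 0 := by
        intro h0; apply hprodne; rw [h0, mul_zero, zero_mul]
      have hY0 : Y ≠ 0 := by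
        intro h0; apply hprodne; rw [h0, zero_pow hn1', mul_zero]
      -- E^{n-1} < (B*Y^n)^{n-1}
      have hlt1 : (N ^ n * B) * E ^ (n - 1) < (N ^ n * B) * (B * Y ^ n) ^ (n - 1) := by
        calc (N ^ n * B) * E ^ (n - 1) ≤ 1 := hw
          _ < (N * B * Y ^ (n - 1)) ^ n := by
              calc (1 : _) = 1 ^ n := (one_pow n).symm
                _ < (N * B * Y ^ (n - 1)) ^ n := aux_pow_lt hc hprodne hnne
          _ = (N ^ n * B) * (B * Y ^ n) ^ (n - 1) := aux_id N B Y hn1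
      have hNB0 : (0 : _) < N ^ n * B :=
        zero_lt_iff.mpr (mul_ne_zero (pow_ne_zero n hN0) hB0)
      have hpowlt : E ^ (n - 1) < (B * Y ^ n) ^ (n - 1) :=
        lt_of_mul_lt_mul_of_le₀ (by
          calc (N ^ n * B) * E ^ (n-1) < (N ^ n * B) * (B * Y ^ n) ^ (n - 1) := hlt1
          ) hNB0 (le_refl _)
      have hEBY : E < B * Y ^ n := by
        by_contra hge
        exact absurd (pow_le_pow_left' (not_lt.mp hge) (n - 1)) (not_le.mpr hpowlt)
      -- v (y (j₀+1)) = B * Y^n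
      have hval_next : v (y (j₀ + 1)) = B * Y ^ n := by
        rw [hrec j₀, Valuation.map_add_eq_of_lt_left, map_mul, map_pow]
        rw [map_mul, map_pow]; exact hEBY
      -- B * Y^n > Y
      have hBY1 : 1 < B * Y ^ (n - 1) := by
        calc (1 : _) < N * B * Y ^ (n - 1) := hc
          _ = N * (B * Y ^ (n - 1)) := mul_assoc _ _ _
          _ ≤ 1 * (B * Y ^ (n - 1)) := mul_le_mul_left hN1 _
          _ = B * Y ^ (n - 1) := one_mul _
      have hYlt : Y < B * Y ^ n := by
        have hYn : Y ^ n = Y ^ (n - 1) * Y := by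
          conv_lhs => rw [show n = (n - 1) + 1 by omega]
          rw [pow_succ]
        calc Y = Y * 1 := (mul_one Y).symm
          _ < Y * (B * Y ^ (n - 1)) := mul_lt_mul_of_pos_left hBY1 (zero_lt_iff.mpr hY0)
          _ = B * Y ^ n := by rw [hYn]; ac_rfl
      have hj₁mem : (j₀ + 1) % h ∈ Finset.range h := by
        simp [Nat.mod_lt _ (show 0 < h by omega)]
      have : v (y ((j₀ + 1) % h)) = B * Y ^ n := by rw [← hmod, hval_next]
      have hcontr := hj₀max _ hj₁mem
      rw [this] at hcontr
      exact absurd hYlt (not_lt.mpr hcontr)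
    calc N * B * v (y j) ^ (n - 1) = (v (y j) ^ (n-1)) * (N * B) := by ac_rfl
      _ ≤ (v (y j₀) ^ (n-1)) * (N * B) :=
          mul_le_mul_left (pow_le_pow_left' (hj₀max j hj) _) _
      _ = N * B * v (y j₀) ^ (n-1) := by ac_rfl
      _ ≤ 1 := hfac
  · -- direction B (contrapositive)
    intro hμ
    by_contra hw
    push_neg at hw
    have hwne : N ^ n * B * E ^ (n - 1) ≠ 0 := zero_lt_iff.mp (lt_trans zero_lt_one hw)
    have hB0 : B ≠ 0 := by intro h0; apply hwne; rw [h0, mul_zero, zero_mul]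
    have hE0 : E ≠ 0 := by intro h0; apply hwne; rw [h0, zero_pow hn1', mul_zero]
    have hBE : 1 < B * E ^ (n - 1) := by
      calc (1 : _) < N ^ n * B * E ^ (n - 1) := hw
        _ = N ^ n * (B * E ^ (n - 1)) := mul_assoc _ _ _
        _ ≤ 1 * (B * E ^ (n - 1)) := mul_le_mul_left (pow_le_one' hN1 n) _
        _ = B * E ^ (n - 1) := one_mul _
    -- step lemma
    have hstep : ∀ j, E < B * v (y j) ^ n → E < B * v (y (j + 1)) ^ n ∧ v (y j) < v (y (j + 1)) := by
      intro j hj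
      set Y := v (y j) with hY
      have hY0 : Y ≠ 0 := by
        intro h0
        rw [h0, zero_pow hnne, mul_zero] at hj
        exact absurd hj (not_lt_zero')
      have hBY1 : 1 < B * Y ^ (n - 1) := by
        have hid := aux_id 1 B Y hn1
        simp only [one_mul, one_pow] at hid
        have hpow : E ^ (n - 1) ≤ (B * Y ^ n) ^ (n - 1) := pow_le_pow_left' hj.le _
        have : 1 < (B * Y ^ (n - 1)) ^ n := by
          calc (1 : _) < B * E ^ (n - 1) := hBE
            _ ≤ B * (B * Y ^ n) ^ (n - 1) := mul_le_mul_right hpow B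
            _ = (B * Y ^ (n - 1)) ^ n := by rw [hid]
        exact aux_one_lt_of_pow this
      have hval_next : v (y (j + 1)) = B * Y ^ n := by
        rw [hrec j, Valuation.map_add_eq_of_lt_left, map_mul, map_pow]
        rw [map_mul, map_pow]; exact hj
      have hYn : Y ^ n = Y ^ (n - 1) * Y := by
        conv_lhs => rw [show n = (n - 1) + 1 by omega]
        rw [pow_succ]
      have hincr : Y < v (y (j + 1)) := by
        rw [hval_next]
        calc Y = Y * 1 := (mul_one Y).symm
          _ < Y * (B * Y ^ (n - 1)) := mul_lt_mul_of_pos_left hBY1 (zero_lt_iff.mpr hY0)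
          _ = B * Y ^ n := by rw [hYn]; ac_rfl
      refine ⟨?_, hincr⟩
      rw [hval_next]
      have h1b : 1 < B * (B * Y ^ n) ^ (n - 1) := by
        calc (1 : _) < B * E ^ (n - 1) := hBE
          _ ≤ B * (B * Y ^ n) ^ (n - 1) := mul_le_mul_right (pow_le_pow_left' hj.le _) B
      calc E = 1 * E := (one_mul E).symm
        _ < (B * (B * Y ^ n) ^ (n - 1)) * (B * Y ^ n) :=
            lt_of_lt_of_le (mul_lt_mul_of_pos_left hj zero_lt_one) (mul_le_mul_left h1b.le _)
        _ = B * (B * Y ^ n) ^ n := by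
            rw [mul_assoc, ← pow_succ, Nat.sub_add_cancel hn1]
    -- no index can be in the "greater" regime
    have hnot : ∀ j, ¬ (E < B * v (y j) ^ n) := by
      intro j hj
      have chain : ∀ k, E < B * v (y (j + k)) ^ n := by
        intro k
        induction k with
        | zero => simpa using hj
        | succ k ih =>
          have := (hstep _ ih).1
          rwa [show j + k + 1 = j + (k + 1) by omega] at this
      have incr : ∀ k, v (y j) < v (y (j + k + 1)) := by
        intro k
        induction k with
        | zero =>
          have := (hstep j (by simpa using chain 0)).2
          simpa using this
        | succ k ih =>
          have hs := (hstep (j + k + 1) (by simpa [show j + k + 1 = j + (k+1) by omega] using chain (k + 1))).2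
          calc v (y j) < v (y (j + k + 1)) := ih
            _ < v (y (j + k + 1 + 1)) := hs
            _ = v (y (j + (k + 1) + 1)) := by rw [show j + k + 1 + 1 = j + (k+1) + 1 by omega]
      have := incr (h - 1)
      rw [show j + (h - 1) + 1 = j + h by omega, hper'] at this
      exact lt_irrefl _ this
    -- hence equality everywhere
    have heq : ∀ j, B * v (y j) ^ n = E := by
      intro j
      rcases lt_trichotomy (B * v (y j) ^ n) E with hlt | heq | hgt
      · exfalso
        have hval_next : v (y (j + 1)) = E := by
          rw [hrec j, Valuation.map_add_eq_of_lt_right]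
          rw [map_mul, map_pow]; exact hlt
        apply hnot (j + 1)
        rw [hval_next]
        have hEn : E ^ n = E ^ (n - 1) * E := by
          conv_lhs => rw [show n = (n - 1) + 1 by omega]
          rw [pow_succ]
        calc E = E * 1 := (mul_one E).symm
          _ < E * (B * E ^ (n - 1)) := mul_lt_mul_of_pos_left hBE (zero_lt_iff.mpr hE0)
          _ = B * E ^ n := by rw [hEn]; ac_rfl
      · exact heq
      · exact absurd hgt (hnot j)
    -- final contradiction
    have hfinal : (∏ j ∈ Finset.range h, (N * B * v (y j) ^ (n - 1))) ^ n
        = (N ^ n * B * E ^ (n - 1)) ^ h := by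
      rw [← Finset.prod_pow]
      rw [Finset.prod_congr rfl (fun j _ => ?_), Finset.prod_const, Finset.card_range]
      rw [aux_id N B (v (y j)) hn1, heq j]
    have h1 : (1 : _) < (N ^ n * B * E ^ (n - 1)) ^ h := one_lt_pow' hw (by omega)
    rw [← hfinal] at h1
    have := aux_one_lt_of_pow h1
    exact absurd this (not_lt.mpr hμ)


lemma poly_structure (p : Polynomial ℂ) (n : ℕ) (hn : 2 ≤ n) (hdeg : p.natDegree = n)
    (hcrit : ∃! z₀ : ℂ, (Polynomial.derivative p).eval z₀ = 0) :
    ∃ b γ d : ℂ, b ≠ 0 ∧ (∀ x, p.eval x = b * (x - γ) ^ n + d) ∧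
      (∀ x, (Polynomial.derivative p).eval x = n * b * (x - γ) ^ (n - 1)) := by
  obtain ⟨γ, hγ, huniq⟩ := hcrit
  have hn0 : (n : ℂ) ≠ 0 := Nat.cast_ne_zero.mpr (by omega)
  have hp0 : p ≠ 0 := fun e => by simp [e] at hdeg; omega
  have hlead : p.coeff n ≠ 0 := by
    rw [← hdeg]
    exact leadingCoeff_ne_zero.mpr hp0
  have hidx : n - 1 + 1 = n := by omega
  have hq_coeff : (derivative p).coeff (n - 1) = p.coeff n * n := by
    rw [coeff_derivative]
    rw [hidx]
    congr 1
    push_cast [Nat.cast_sub (show 1 ≤ n by omega)]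
    ring
  have hq_coeff_ne : (derivative p).coeff (n - 1) ≠ 0 := by
    rw [hq_coeff]; exact mul_ne_zero hlead hn0
  have hqne : derivative p ≠ 0 := fun e => by simp [e] at hq_coeff_ne
  have hqdeg : (derivative p).natDegree = n - 1 := by
    refine le_antisymm ?_ (le_natDegree_of_ne_zero hq_coeff_ne)
    have := natDegree_derivative_le p
    omega
  have hsplits : Splits (derivative p) := IsAlgClosed.splits _
  have hcard : (derivative p).roots.card = n - 1 := by
    rw [splits_iff_card_roots.mp hsplits, hqdeg]
  have hroots : (derivative p).roots = Multiset.replicate (n - 1) γ := by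
    rw [Multiset.eq_replicate]
    exact ⟨hcard, fun x hx => huniq x ((mem_roots'.mp hx).2)⟩
  have hq_eq : derivative p = C (derivative p).leadingCoeff * (X - C γ) ^ (n - 1) := by
    have h := hsplits.eq_prod_roots
    rwa [hroots, Multiset.map_replicate, Multiset.prod_replicate] at h
  set a := (derivative p).leadingCoeff with ha
  have ha0 : a ≠ 0 := leadingCoeff_ne_zero.mpr hqne
  set b := a / n with hb
  have hb0 : b ≠ 0 := div_ne_zero ha0 hn0
  have hab : (n : ℂ) * b = a := by rw [hb]; field_simp
  set r := p - C b * (X - C γ) ^ n with hr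
  have hr' : derivative r = 0 := by
    rw [hr, derivative_sub, derivative_mul, derivative_C, zero_mul, zero_add, derivative_pow,
      derivative_sub, derivative_X, derivative_C, sub_zero, mul_one, hq_eq]
    rw [← mul_assoc, ← C_mul,
      show b * (n : ℂ) = a from by rw [mul_comm]; exact hab, sub_self]
  have hrC : r = C (r.coeff 0) := eq_C_of_derivative_eq_zero hr'
  refine ⟨b, γ, r.coeff 0, hb0, ?_, ?_⟩
  · intro x
    have hp_eq : p = C b * (X - C γ) ^ n + C (r.coeff 0) := by
      rw [← hrC, hr]; ring
    rw [hp_eq]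
    simp
  · intro x
    rw [hq_eq, ← hab]
    simp

lemma isIntegral_transfer {R S K : Type*} [CommRing R] [CommRing S] [CommRing K] [Algebra R K]
    [Algebra S K] (f : R →+* S) (hf : ∀ a, algebraMap S K (f a) = algebraMap R K a) {x : K}
    (h : IsIntegral R x) : IsIntegral S x := by
  obtain ⟨q, hq, hq0⟩ := h
  refine ⟨q.map f, hq.map f, ?_⟩
  rw [Polynomial.eval₂_map, show (algebraMap S K).comp f = algebraMap R K from RingHom.ext hf]
  exact hq0

lemma mem_transfer (u t : ℂ) :
    t ∈ Algebra.adjoin ℤ ({u} : Set ℂ) ↔ t ∈ Subring.closure ({u} : Set ℂ) := by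
  rw [Algebra.adjoin_int]
  rfl

lemma isIntegral_adjoin_iff (u x : ℂ) : IsIntegral ↥(Algebra.adjoin ℤ ({u} : Set ℂ)) x ↔
    IsIntegral (Subring.closure ({u} : Set ℂ)) x := by
  constructor
  · refine isIntegral_transfer (K := ℂ)
      { toFun := fun a => ⟨a.1, (mem_transfer u a.1).mp a.2⟩
        map_one' := rfl, map_mul' := fun _ _ => rfl
        map_zero' := rfl, map_add' := fun _ _ => rfl } (fun a => rfl)
  · refine isIntegral_transfer (K := ℂ)
      { toFun := fun a => ⟨a.1, (mem_transfer u a.1).mpr a.2⟩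
        map_one' := rfl, map_mul' := fun _ _ => rfl
        map_zero' := rfl, map_add' := fun _ _ => rfl } (fun a => rfl)


theorem mem_intClosure_iff (u x : ℂ) :
    x ∈ intClosure u ↔ ∀ O : ValuationSubring ℂ, u ∈ O → x ∈ O := by
  rw [intClosure, Set.mem_setOf_eq, isIntegral_adjoin_iff,
    isIntegral_iff_forall_valuationSubring]
  constructor
  · intro H O hu
    exact H O (Subring.closure_le.mpr (Set.singleton_subset_iff.mpr hu))
  · intro H O hle
    exact H O (hle (Subring.subset_closure (Set.mem_singleton u)))

end Auxiliary

theorem stmt4 (p : Polynomial ℂ) (n : ℕ) (hn : 2 ≤ n) (hdeg : p.natDegree = n)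
    (hcrit : ∃! z₀ : ℂ, (Polynomial.derivative p).eval z₀ = 0)
    (f : ℂ → ℂ) (hf : f = fun z : ℂ => p.eval z)
    (z z' : ℂ) (h h' : ℕ) (hh : 1 ≤ h) (hh' : 1 ≤ h')
    (hz : f^[h] z = z) (hz' : f^[h'] z' = z')
    (μ μ' : ℂ)
    (hμ : μ = ∏ j ∈ Finset.range h, (Polynomial.derivative p).eval (f^[j] z))
    (hμ' : μ' = ∏ j ∈ Finset.range h', (Polynomial.derivative p).eval (f^[j] z')) :
    intClosure μ = intClosure μ' := by
  obtain ⟨b, γ, d, hb0, hev, hdev⟩ := poly_structure p n hn hdeg hcrit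
  set e : ℂ := d - γ with he
  set w : ℂ := (n : ℂ) ^ n * b * e ^ (n - 1) with hw
  have orbit : ∀ (z₀ : ℂ) (h₀ : ℕ), 1 ≤ h₀ → f^[h₀] z₀ = z₀ →
      ∀ O : ValuationSubring ℂ,
      (w ∈ O ↔ (∏ j ∈ Finset.range h₀,
        (Polynomial.derivative p).eval (f^[j] z₀)) ∈ O) := by
    intro z₀ h₀ hh₀ hz₀ O
    have hdy := dyn_lemma O hn hh₀ (b := b) (e := e) (fun j => f^[j] z₀ - γ)
      (fun j => by
        simp only [Function.iterate_succ_apply', hf]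
        rw [hev]
        ring)
      (by simp [hz₀])
    rw [hw]
    rw [Finset.prod_congr rfl (fun j (_ : j ∈ Finset.range h₀) => hdev (f^[j] z₀))]
    exact hdy
  subst hμ hμ'
  ext x
  rw [mem_intClosure_iff, mem_intClosure_iff]
  have key : ∀ O : ValuationSubring ℂ,
      ((∏ j ∈ Finset.range h, (Polynomial.derivative p).eval (f^[j] z)) ∈ O ↔
       (∏ j ∈ Finset.range h', (Polynomial.derivative p).eval (f^[j] z')) ∈ O) :=
    fun O => ((orbit z h hh hz O).symm.trans (orbit z' h' hh' hz' O))
  constructor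
  · intro H O hO
    exact H O ((key O).mpr hO)
  · intro H O hO
    exact H O ((key O).mp hO)
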